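/- Let f : F_q → F_p be weakly regular s-plateaued with sign ε and dual g. Then the Walsh transform of g at 0 satisfies W_g(0) = Σ_{β∈F_q} ξ_p^{g(β)} = p^n − p^{n−s} + ε · η_0(−1)^n · √(p*)^{n−s} · ξ_p^{f(0)}. -/

import Mathlib

open scoped BigOperators Classical

noncomputable section

/-- `ξ_p^j` for `j : ZMod p`, where `ξ_p = exp(2πi/p)` and the exponent `j`
is lifted to a natural number. -/
def ep (p : ℕ) (j : ZMod p) : ℂ :=
  Complex.exp (2 * Real.pi * Complex.I * (j.val : ℂ) / (p : ℂ))

/-- `√(p*)`: equal to `√p` if `p ≡ 1 (mod 4)` and to `i√p` if `p ≡ 3 (mod 4)`. -/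
def sqrtPStar (p : ℕ) : ℂ :=
  if p % 4 = 1 then ((Real.sqrt p : ℝ) : ℂ) else Complex.I * ((Real.sqrt p : ℝ) : ℂ)

/-- The quadratic character `η₀` of `F_p` (extended by `η₀(0) = 0`), with values in `ℂ`. -/
def eta0 (p : ℕ) [Fact p.Prime] (j : ZMod p) : ℂ :=
  ((quadraticChar (ZMod p) j : ℤ) : ℂ)

/-- The Walsh transform of `f : F_q → F_p`. -/
def walsh (p : ℕ) {F : Type*} [Field F] [Fintype F] [Algebra (ZMod p) F]
    (f : F → ZMod p) (β : F) : ℂ :=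
  ∑ x : F, ep p (f x - Algebra.trace (ZMod p) F (β * x))

/-- `f` is weakly regular `s`-plateaued with sign `ε` and dual `g`:
`W_f(β) = ε √(p*)^{n+s} ξ_p^{g(β)}` on the Walsh support, `W_f(β) = 0` off it,
and `g` vanishes off the Walsh support. -/
def IsWeaklyRegularPlateaued (p n s : ℕ) {F : Type*} [Field F] [Fintype F]
    [Algebra (ZMod p) F] (f : F → ZMod p) (ε : ℂ) (g : F → ZMod p) : Prop :=
  (ε = 1 ∨ ε = -1) ∧
  (∀ β : F, walsh p f β ≠ 0 →
      walsh p f β = ε * sqrtPStar p ^ (n + s) * ep p (g β)) ∧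
  (∀ β : F, walsh p f β = 0 → g β = 0)

/-- `f` lies in the class `WRP`: weakly regular `s`-plateaued with sign `ε` and dual `g`,
unbalanced, `f(0) = 0`, and `f(ax) = a^h f(x)` for some positive even `h` with
`gcd(h-1, p-1) = 1`. -/
def IsWRP (p n s : ℕ) {F : Type*} [Field F] [Fintype F]
    [Algebra (ZMod p) F] (f : F → ZMod p) (ε : ℂ) (g : F → ZMod p) : Prop :=
  IsWeaklyRegularPlateaued p n s f ε g ∧
  walsh p f 0 ≠ 0 ∧
  f 0 = 0 ∧
  ∃ h : ℕ, 0 < h ∧ Even h ∧ Nat.gcd (h - 1) (p - 1) = 1 ∧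
    ∀ (a : (ZMod p)ˣ) (x : F),
      f (algebraMap (ZMod p) F (a : ZMod p) * x) = (a : ZMod p) ^ h * f x

section A

variable (p : ℕ) [Fact p.Prime]

lemma zetap_pow (p : ℕ) [Fact p.Prime] :
    Complex.exp (2 * Real.pi * Complex.I / (p : ℂ)) ^ p = 1 := by
  have hp : (p:ℂ) ≠ 0 := Nat.cast_ne_zero.mpr (Fact.out : p.Prime).ne_zero
  rw [← Complex.exp_nat_mul]
  have : (p:ℂ) * (2 * Real.pi * Complex.I / (p : ℂ)) = 2 * Real.pi * Complex.I := by
    field_simp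
  rw [this]
  simpa using Complex.exp_int_mul_two_pi_mul_I 1

def epChar : AddChar (ZMod p) ℂ :=
  haveI : NeZero p := ⟨(Fact.out : p.Prime).ne_zero⟩
  AddChar.zmodChar p (zetap_pow p)

lemma ep_eq (j : ZMod p) : ep p j = epChar p j := by
  haveI : NeZero p := ⟨(Fact.out : p.Prime).ne_zero⟩
  rw [epChar, AddChar.zmodChar_apply, ← Complex.exp_nat_mul, ep]
  congr 1
  ring

lemma ep_zero : ep p 0 = 1 := by rw [ep_eq]; exact AddChar.map_zero_eq_one _

lemma ep_add (a b : ZMod p) : ep p (a + b) = ep p a * ep p b := by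
  rw [ep_eq, ep_eq, ep_eq]; exact AddChar.map_add_eq_mul _ _ _

lemma ep_mul_neg (a : ZMod p) : ep p a * ep p (-a) = 1 := by
  rw [← ep_add, add_neg_cancel, ep_zero]

lemma ep_abs (j : ZMod p) : ‖ep p j‖ = 1 := by
  have : (2 * Real.pi * Complex.I * ((j.val : ℕ) : ℂ) / (p : ℂ))
      = ((2 * Real.pi * (j.val : ℝ) / (p : ℝ) : ℝ) : ℂ) * Complex.I := by
    push_cast; ring
  rw [ep, this, Complex.norm_exp_ofReal_mul_I]

lemma ep_conj (j : ZMod p) : (starRingEnd ℂ) (ep p j) = ep p (-j) := by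
  have h1 : ep p j * (starRingEnd ℂ) (ep p j) = 1 := by
    rw [Complex.mul_conj]
    norm_cast
    rw [Complex.normSq_eq_norm_sq, ep_abs]; norm_num
  have h2 := ep_mul_neg p j
  have hne : ep p j ≠ 0 := by
    intro h
    rw [h, zero_mul] at h1; exact one_ne_zero h1.symm
  exact mul_left_cancel₀ hne (h1.trans h2.symm)

lemma epChar_ne_one {a : ZMod p} (ha : a ≠ 0) : epChar p a ≠ 1 := by
  haveI : NeZero p := ⟨(Fact.out : p.Prime).ne_zero⟩
  have hpr : IsPrimitiveRoot (Complex.exp (2 * Real.pi * Complex.I / (p : ℂ))) p :=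
    Complex.isPrimitiveRoot_exp p (Fact.out : p.Prime).ne_zero
  rw [epChar, AddChar.zmodChar_apply]
  intro h
  have := (hpr.pow_eq_one_iff_dvd a.val).mp h
  have h0 : a.val = 0 := Nat.eq_zero_of_dvd_of_lt this (ZMod.val_lt a)
  exact ha ((ZMod.val_eq_zero a).mp h0)

end A

section B
variable (p : ℕ) [Fact p.Prime] {F : Type*} [Field F] [Fintype F] [Algebra (ZMod p) F]

lemma trace_nondeg {x : F} (hx : x ≠ 0) :
    ∃ b : F, Algebra.trace (ZMod p) F (x * b) ≠ 0 := by
  have hinj : Function.Injective (algebraMap (ZMod p) F) := (algebraMap (ZMod p) F).injective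
  haveI hcharF : CharP F p := charP_of_injective_ringHom hinj p
  have hchar : ringChar F = p := ringChar.eq F p
  subst hchar
  exact FiniteField.trace_to_zmod_nondegenerate F hx

/-- The additive character `x ↦ ξ_p^{Tr x}` on `F`. -/
def psiF : AddChar F ℂ :=
  (epChar p).compAddMonoidHom (Algebra.trace (ZMod p) F).toAddMonoidHom

lemma sum_tr (x : F) :
    ∑ β : F, ep p (-(Algebra.trace (ZMod p) F (β * x))) =
      if x = 0 then (Fintype.card F : ℂ) else 0 := by
  have hterm : ∀ β : F, ep p (-(Algebra.trace (ZMod p) F (β * x)))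
      = (AddChar.mulShift (psiF p) (-x)) β := by
    intro β
    rw [AddChar.mulShift_apply, psiF, AddChar.compAddMonoidHom_apply, ep_eq]
    congr 1
    rw [LinearMap.toAddMonoidHom_coe, ← map_neg]
    ring_nf
  simp_rw [hterm]
  split_ifs with h
  · subst h
    rw [neg_zero, AddChar.mulShift_zero]
    exact AddChar.sum_eq_card_of_eq_one rfl
  · apply AddChar.sum_eq_zero_of_ne_one
    intro hone
    obtain ⟨b, hb⟩ := trace_nondeg p (neg_ne_zero.mpr h)
    apply hb
    have := DFunLike.congr_fun hone b
    rw [AddChar.mulShift_apply, AddChar.one_apply, psiF, AddChar.compAddMonoidHom_apply,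
      LinearMap.toAddMonoidHom_coe] at this
    by_contra hne
    exact epChar_ne_one p hne this

lemma sum_walsh (f : F → ZMod p) :
    ∑ β : F, walsh p f β = (Fintype.card F : ℂ) * ep p (f 0) := by
  unfold walsh
  rw [Finset.sum_comm]
  have hterm : ∀ x β : F, ep p (f x - Algebra.trace (ZMod p) F (β * x))
      = ep p (f x) * ep p (-(Algebra.trace (ZMod p) F (β * x))) := by
    intro x β
    rw [← ep_add]; congr 1; ring
  simp_rw [hterm, ← Finset.mul_sum, sum_tr]
  rw [Finset.sum_eq_single_of_mem 0 (Finset.mem_univ 0)]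
  · rw [if_pos rfl, mul_comm]
  · intro x _ hx
    rw [if_neg hx, mul_zero]

lemma parseval (f : F → ZMod p) :
    ∑ β : F, walsh p f β * (starRingEnd ℂ) (walsh p f β)
      = (Fintype.card F : ℂ) ^ 2 := by
  have hconj : ∀ β : F, (starRingEnd ℂ) (walsh p f β)
      = ∑ y : F, ep p (-(f y - Algebra.trace (ZMod p) F (β * y))) := by
    intro β
    rw [walsh, map_sum]
    exact Finset.sum_congr rfl fun y _ => ep_conj p _
  have hterm : ∀ (β x y : F),
      ep p (f x - Algebra.trace (ZMod p) F (β * x)) *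
        ep p (-(f y - Algebra.trace (ZMod p) F (β * y)))
      = ep p (f x) * ep p (-(f y)) * ep p (-(Algebra.trace (ZMod p) F (β * (x - y)))) := by
    intro β x y
    rw [← ep_add, ← ep_add, ← ep_add]
    congr 1
    have h : Algebra.trace (ZMod p) F (β * (x - y))
        = Algebra.trace (ZMod p) F (β * x) - Algebra.trace (ZMod p) F (β * y) := by
      rw [mul_sub, map_sub]
    rw [h]; ring
  calc ∑ β : F, walsh p f β * (starRingEnd ℂ) (walsh p f β)
      = ∑ β : F, ∑ x : F, ∑ y : F,
          ep p (f x) * ep p (-(f y)) * ep p (-(Algebra.trace (ZMod p) F (β * (x - y)))) := by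
        refine Finset.sum_congr rfl fun β _ => ?_
        rw [hconj β, walsh, Finset.sum_mul_sum]
        exact Finset.sum_congr rfl fun x _ => Finset.sum_congr rfl fun y _ => hterm β x y
    _ = ∑ x : F, ∑ y : F, ep p (f x) * ep p (-(f y)) *
          ∑ β : F, ep p (-(Algebra.trace (ZMod p) F (β * (x - y)))) := by
        rw [Finset.sum_comm]
        refine Finset.sum_congr rfl fun x _ => ?_
        rw [Finset.sum_comm]
        exact Finset.sum_congr rfl fun y _ => (Finset.mul_sum _ _ _).symm
    _ = ∑ x : F, ep p (f x) * ep p (-(f x)) * (Fintype.card F : ℂ) := by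
        refine Finset.sum_congr rfl fun x _ => ?_
        rw [Finset.sum_eq_single_of_mem x (Finset.mem_univ x)]
        · rw [sum_tr, if_pos (sub_self x)]
        · intro y _ hy
          rw [sum_tr, if_neg (sub_ne_zero.mpr (Ne.symm hy)), mul_zero]
    _ = (Fintype.card F : ℂ) ^ 2 := by
        simp_rw [ep_mul_neg, one_mul]
        rw [Finset.sum_const, Finset.card_univ, nsmul_eq_mul, sq]

end B

theorem statement_1 (p n s : ℕ) [Fact p.Prime] (hp : p ≠ 2) (hn : 0 < n) (hs : s ≤ n)
    {F : Type*} [Field F] [Fintype F] [Algebra (ZMod p) F]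
    (hq : Fintype.card F = p ^ n)
    (f g : F → ZMod p) (ε : ℂ)
    (hf : IsWeaklyRegularPlateaued p n s f ε g) :
    walsh p g 0 = ∑ β : F, ep p (g β) ∧
    walsh p g 0 = (p : ℂ) ^ n - (p : ℂ) ^ (n - s)
        + ε * (eta0 p (-1)) ^ n * sqrtPStar p ^ (n - s) * ep p (f 0) := by
  obtain ⟨hε, hsupp, hzero⟩ := hf
  have hppos : (0:ℝ) ≤ (p:ℝ) := by positivity
  have hpC : (p:ℂ) ≠ 0 := Nat.cast_ne_zero.mpr (Fact.out : p.Prime).ne_zero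
  have hcardC : (Fintype.card F : ℂ) = (p:ℂ) ^ n := by rw [hq]; push_cast; ring
  have h1 : walsh p g 0 = ∑ β : F, ep p (g β) := by
    unfold walsh
    refine Finset.sum_congr rfl fun x _ => ?_
    rw [zero_mul, map_zero, sub_zero]
  refine ⟨h1, ?_⟩
  rw [h1]
  set c : ℂ := ε * sqrtPStar p ^ (n + s) with hc
  have hεconj : ε * (starRingEnd ℂ) ε = 1 := by rcases hε with rfl | rfl <;> simp
  have hsps : sqrtPStar p * (starRingEnd ℂ) (sqrtPStar p) = (p:ℂ) := by
    rw [sqrtPStar]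
    have h2 : ((Real.sqrt p : ℝ) : ℂ) * ((Real.sqrt p : ℝ) : ℂ) = (p:ℂ) := by
      rw [← Complex.ofReal_mul, Real.mul_self_sqrt hppos]; norm_cast
    split_ifs
    · rw [Complex.conj_ofReal, h2]
    · rw [map_mul, Complex.conj_I, Complex.conj_ofReal]
      calc Complex.I * ((Real.sqrt p : ℝ) : ℂ) * (-Complex.I * ((Real.sqrt p : ℝ) : ℂ))
          = -(Complex.I * Complex.I) *
            (((Real.sqrt p : ℝ) : ℂ) * ((Real.sqrt p : ℝ) : ℂ)) := by ring
        _ = (p:ℂ) := by rw [Complex.I_mul_I, h2]; ring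
  have hcconj : c * (starRingEnd ℂ) c = (p:ℂ) ^ (n + s) := by
    rw [hc, map_mul, map_pow]
    calc ε * sqrtPStar p ^ (n+s) * ((starRingEnd ℂ) ε * (starRingEnd ℂ) (sqrtPStar p) ^ (n+s))
        = (ε * (starRingEnd ℂ) ε) * (sqrtPStar p * (starRingEnd ℂ) (sqrtPStar p)) ^ (n+s) := by
          rw [mul_pow]; ring
      _ = (p:ℂ) ^ (n+s) := by rw [hεconj, hsps, one_mul]
  have hc0 : c ≠ 0 := by
    intro h
    rw [h, zero_mul] at hcconj
    exact (pow_ne_zero _ hpC) hcconj.symm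
  set S : Finset F := Finset.univ.filter (fun β => walsh p f β ≠ 0) with hS
  have hW : ∀ β ∈ S, walsh p f β = c * ep p (g β) := fun β hβ =>
    hsupp β (Finset.mem_filter.mp hβ).2
  -- Parseval gives the cardinality of the support
  have hpars : (S.card : ℂ) * (p:ℂ) ^ (n+s) = (p:ℂ) ^ (2*n) := by
    have h2 := parseval p f
    rw [← Finset.sum_filter_add_sum_filter_not Finset.univ (fun β => walsh p f β ≠ 0)
      (fun β => walsh p f β * (starRingEnd ℂ) (walsh p f β))] at h2
    have hA : ∑ β ∈ S, walsh p f β * (starRingEnd ℂ) (walsh p f β)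
        = (S.card : ℂ) * (p:ℂ) ^ (n+s) := by
      have : ∀ β ∈ S, walsh p f β * (starRingEnd ℂ) (walsh p f β) = (p:ℂ) ^ (n+s) := by
        intro β hβ
        rw [hW β hβ, map_mul, ep_conj]
        calc c * ep p (g β) * ((starRingEnd ℂ) c * ep p (-(g β)))
            = (c * (starRingEnd ℂ) c) * (ep p (g β) * ep p (-(g β))) := by ring
          _ = (p:ℂ) ^ (n+s) := by rw [hcconj, ep_mul_neg, mul_one]
      rw [Finset.sum_congr rfl this, Finset.sum_const, nsmul_eq_mul]
    have hB : ∑ β ∈ Finset.univ.filter (fun β => ¬ walsh p f β ≠ 0),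
        walsh p f β * (starRingEnd ℂ) (walsh p f β) = 0 := by
      refine Finset.sum_eq_zero fun β hβ => ?_
      have h0 := (Finset.mem_filter.mp hβ).2
      rw [not_not] at h0
      rw [h0, zero_mul]
    rw [hA, hB, add_zero, hcardC, ← pow_mul] at h2
    rw [h2]; congr 1; ring
  have hScard : (S.card : ℂ) = (p:ℂ) ^ (n-s) := by
    have h3 : (p:ℂ) ^ (2*n) = (p:ℂ) ^ (n-s) * (p:ℂ) ^ (n+s) := by
      rw [← pow_add]; congr 1; omega
    exact mul_right_cancel₀ (pow_ne_zero _ hpC) (hpars.trans h3)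
  -- split the sum
  have hsplit := Finset.sum_filter_add_sum_filter_not Finset.univ
    (fun β => walsh p f β ≠ 0) (fun β => ep p (g β))
  have hoff : ∑ β ∈ Finset.univ.filter (fun β => ¬ walsh p f β ≠ 0), ep p (g β)
      = (p:ℂ) ^ n - (p:ℂ) ^ (n-s) := by
    have hone : ∀ β ∈ Finset.univ.filter (fun β => ¬ walsh p f β ≠ 0), ep p (g β) = 1 := by
      intro β hβ
      have h0 := (Finset.mem_filter.mp hβ).2
      rw [not_not] at h0
      rw [hzero β h0, ep_zero]
    rw [Finset.sum_congr rfl hone, Finset.sum_const, nsmul_eq_mul, mul_one]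
    have hcards := Finset.card_filter_add_card_filter_not
      (s := (Finset.univ : Finset F)) (p := fun β => walsh p f β ≠ 0)
    rw [Finset.card_univ] at hcards
    rw [← hS] at hcards
    have : ((Finset.univ.filter (fun β => ¬ walsh p f β ≠ 0)).card : ℂ)
        = (Fintype.card F : ℂ) - (S.card : ℂ) := by
      have h5 : (Finset.univ.filter (fun β => ¬ walsh p f β ≠ 0)).card
          = Fintype.card F - S.card := by omega
      have h6 : S.card ≤ Fintype.card F := by omega
      rw [h5, Nat.cast_sub h6]
    rw [this, hcardC, hScard]
  -- the key fact η₀(-1) √(p*)² = p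
  have hkey : eta0 p (-1) * sqrtPStar p ^ 2 = (p:ℂ) := by
    have hmod : p % 4 = 1 ∨ p % 4 = 3 := by
      rcases (Fact.out : p.Prime).eq_two_or_odd with h | h
      · exact absurd h hp
      · omega
    have hqc : quadraticChar (ZMod p) (-1) = ZMod.χ₄ (Fintype.card (ZMod p)) :=
      quadraticChar_neg_one (by rw [ZMod.ringChar_zmod_n]; exact hp)
    have hsq : ((Real.sqrt p : ℝ) : ℂ) ^ 2 = (p:ℂ) := by
      rw [← Complex.ofReal_pow, Real.sq_sqrt hppos]; norm_cast
    rw [eta0, hqc, ZMod.card]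
    rcases hmod with h | h
    · rw [ZMod.χ₄_nat_one_mod_four h, sqrtPStar, if_pos h, hsq]
      push_cast; ring
    · rw [ZMod.χ₄_nat_three_mod_four h, sqrtPStar, if_neg (by omega), mul_pow,
        Complex.I_sq, hsq]
      push_cast; ring
  have hon : ∑ β ∈ S, ep p (g β)
      = ε * (eta0 p (-1)) ^ n * sqrtPStar p ^ (n-s) * ep p (f 0) := by
    have hcsum : c * ∑ β ∈ S, ep p (g β) = (Fintype.card F : ℂ) * ep p (f 0) := by
      rw [Finset.mul_sum]
      have : ∑ β ∈ S, c * ep p (g β) = ∑ β ∈ S, walsh p f β :=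
        Finset.sum_congr rfl fun β hβ => (hW β hβ).symm
      rw [this, hS, Finset.sum_filter_ne_zero, sum_walsh]
    have hpow : sqrtPStar p ^ (n+s) * sqrtPStar p ^ (n-s) = (sqrtPStar p ^ 2) ^ n := by
      rw [← pow_add, ← pow_mul]; congr 1; omega
    have hε2 : ε * ε = 1 := by rcases hε with rfl | rfl <;> norm_num
    have hE : c * (ε * (eta0 p (-1)) ^ n * sqrtPStar p ^ (n-s) * ep p (f 0))
        = (Fintype.card F : ℂ) * ep p (f 0) := by
      have hrw : c * (ε * (eta0 p (-1)) ^ n * sqrtPStar p ^ (n-s) * ep p (f 0))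
          = (ε * ε) * ((eta0 p (-1)) ^ n *
            (sqrtPStar p ^ (n+s) * sqrtPStar p ^ (n-s))) * ep p (f 0) := by
        rw [hc]; ring
      rw [hrw, hpow, hε2, one_mul, ← mul_pow, hkey, hcardC]
    exact mul_left_cancel₀ hc0 (hcsum.trans hE.symm)
  rw [← hsplit]
  rw [hS] at hon
  rw [hon, hoff]
  ring
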